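/- Let q = 2^n with n ≥ 2, and let V be an F_2-subspace of F_q of codimension 2. Then there exist distinct α, α' ∈ F_q* such that V is exactly the image of the map T_{α,α'} : F_q → F_q, x ↦ x(x+α)(x+α')(x+α+α'). -/

import Mathlib

open Module

set_option maxHeartbeats 1000000
set_option synthInstance.maxHeartbeats 400000

private lemma rank_two_enum {F : Type*} [Field F] [CharP F 2] [Algebra (ZMod 2) F]
    [FiniteDimensional (ZMod 2) F]
    (W : Submodule (ZMod 2) F) (hW : finrank (ZMod 2) W = 2) :
    ∃ β β' : F, β ∈ W ∧ β' ∈ W ∧ β ≠ 0 ∧ β' ≠ 0 ∧ β ≠ β' ∧ β + β' ≠ 0 ∧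
      ∀ y ∈ W, y = 0 ∨ y = β ∨ y = β' ∨ y = β + β' := by
  let b := Module.finBasisOfFinrankEq (ZMod 2) W hW
  have hzmod : ∀ r : ZMod 2, r = 0 ∨ r = 1 := by decide
  have hne : ((b 0 : W) : F) ≠ ((b 1 : W) : F) := by
    intro h
    exact (b.injective.ne (by decide : (0 : Fin 2) ≠ 1)) (Subtype.coe_injective h)
  refine ⟨b 0, b 1, (b 0).2, (b 1).2, ?_, ?_, hne, ?_, ?_⟩
  · simpa using b.ne_zero 0
  · simpa using b.ne_zero 1
  · intro h
    rw [add_eq_zero_iff_eq_neg, CharTwo.neg_eq] at h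
    exact hne h
  · intro y hy
    have hrepr := b.sum_repr ⟨y, hy⟩
    rw [Fin.sum_univ_two] at hrepr
    have hy0 : y = ((b.repr ⟨y, hy⟩ 0 • b 0 + b.repr ⟨y, hy⟩ 1 • b 1 : W) : F) := by
      rw [hrepr]
    rcases hzmod (b.repr ⟨y, hy⟩ 0) with h0 | h0 <;>
      rcases hzmod (b.repr ⟨y, hy⟩ 1) with h1 | h1 <;>
      rw [h0, h1] at hy0 <;>
      simp only [zero_smul, one_smul, add_zero, zero_add, Submodule.coe_add,
        ZeroMemClass.coe_zero] at hy0 <;> tauto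

private lemma trace_sq {F : Type*} [Field F] [Finite F] [Algebra (ZMod 2) F] [CharP F 2]
    (x : F) : Algebra.trace (ZMod 2) F (x ^ 2) = Algebra.trace (ZMod 2) F x := by
  haveI : FiniteDimensional (ZMod 2) F := Module.Finite.of_finite
  haveI : ExpChar F 2 := ExpChar.prime Nat.prime_two
  have hzmod : ∀ r : ZMod 2, r = 0 ∨ r = 1 := by decide
  let σ : F ≃ₐ[ZMod 2] F :=
    { frobeniusEquiv F 2 with
      commutes' := by
        intro r
        rcases hzmod r with h | h <;> subst h <;> simp }
  have hσ : ∀ z : F, σ z = z ^ 2 := fun z => rfl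
  have key : ∀ z : F,
      algebraMap (ZMod 2) F (Algebra.trace (ZMod 2) F z) = ∑ τ : F ≃ₐ[ZMod 2] F, τ z :=
    fun z => trace_eq_sum_automorphisms z
  apply (algebraMap (ZMod 2) F).injective
  rw [key, key, ← hσ]
  exact Fintype.sum_bijective (Equiv.mulRight σ) (Equiv.bijective _) _ _
    (fun τ => (AlgEquiv.mul_apply τ σ x).symm)

private lemma quartic_roots_card {F : Type*} [Field F] [Fintype F] [DecidableEq F] (b c : F) :
    (Finset.univ.filter (fun x : F => x ^ 4 + b * x ^ 2 + c * x = 0)).card ≤ 4 := by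
  set p : Polynomial F :=
    Polynomial.X ^ 4 + Polynomial.C b * Polynomial.X ^ 2 + Polynomial.C c * Polynomial.X
    with hpdef
  have hpdeg : p.natDegree = 4 := by
    rw [hpdef]; compute_degree!
  have hp0 : p ≠ 0 := fun h => by simp [h] at hpdeg
  have hsub : (Finset.univ.filter (fun x : F => x ^ 4 + b * x ^ 2 + c * x = 0))
      ⊆ p.roots.toFinset := by
    intro x hx
    rw [Finset.mem_filter] at hx
    rw [Multiset.mem_toFinset, Polynomial.mem_roots hp0]
    simpa [hpdef, Polynomial.IsRoot] using hx.2
  calc (Finset.univ.filter (fun x : F => x ^ 4 + b * x ^ 2 + c * x = 0)).card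
      ≤ p.roots.toFinset.card := Finset.card_le_card hsub
    _ ≤ Multiset.card p.roots := Multiset.toFinset_card_le _
    _ ≤ 4 := by simpa [hpdeg] using p.card_roots'

/-- Every `𝔽₂`-subspace `V ⊆ 𝔽_q` of codimension 2 is the image of some map
`T_{α,α'}(x) = x(x+α)(x+α')(x+α+α')` with `α, α'` distinct and nonzero. -/
theorem stmt14 (n : ℕ) (hn : 2 ≤ n) (F : Type*) [Field F] [Fintype F] [Algebra (ZMod 2) F]
    (hF : Fintype.card F = 2 ^ n)
    (V : Submodule (ZMod 2) F) (hV : Module.finrank (ZMod 2) V = n - 2) :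
    ∃ α α' : F, α ≠ 0 ∧ α' ≠ 0 ∧ α ≠ α' ∧
      (V : Set F) = Set.range (fun x : F => x * (x + α) * (x + α') * (x + α + α')) := by
  classical
  obtain ⟨m, rfl⟩ : ∃ m, n = m + 2 := ⟨n - 2, by omega⟩
  haveI : CharP F 2 := charP_of_injective_algebraMap (algebraMap (ZMod 2) F).injective 2
  haveI : FiniteDimensional (ZMod 2) F := Module.Finite.of_finite
  have h2 : (2 : F) = 0 := by exact_mod_cast CharP.cast_eq_zero F 2
  have hsq : ∀ u v : F, (u + v) ^ 2 = u ^ 2 + v ^ 2 := fun u v => by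
    linear_combination u * v * h2
  have hsq3 : ∀ u v w : F, (u + v + w) ^ 2 = u ^ 2 + v ^ 2 + w ^ 2 := fun u v w => by
    rw [hsq (u + v) w, hsq u v]
  have hpc : ∀ a : F, a ^ 2 ^ (m + 2) = a := fun a => by rw [← hF]; exact FiniteField.pow_card a
  have hfr : finrank (ZMod 2) F = m + 2 := by
    have hc := card_eq_pow_finrank (K := ZMod 2) (V := F)
    rw [hF, ZMod.card] at hc
    exact Nat.pow_right_injective le_rfl hc.symm
  set tr := Algebra.trace (ZMod 2) F with htr
  set B := Algebra.traceForm (ZMod 2) F with hBdef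
  have hnd : B.Nondegenerate := traceForm_nondegenerate (ZMod 2) F
  have hrefl : B.IsRefl := (Algebra.traceForm_isSymm (R := ZMod 2) (S := F)).isRefl
  have htrsq : ∀ z : F, tr (z ^ 2) = tr z := fun z => trace_sq z
  have htrp : ∀ (k : ℕ) (z : F), tr (z ^ 2 ^ k) = tr z := by
    intro k
    induction k with
    | zero => intro z; simp
    | succ k ih =>
        intro z
        rw [pow_succ, pow_mul, htrsq, ih]
  -- the orthogonal complement U of V
  set U := B.orthogonal V with hUdef
  have hUr : finrank (ZMod 2) U = 2 := by
    rw [LinearMap.BilinForm.finrank_orthogonal hnd, hfr, hV]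
    omega
  have hVU : V = B.orthogonal U :=
    (LinearMap.BilinForm.orthogonal_orthogonal hnd hrefl V).symm
  obtain ⟨β, β', hβU, hβ'U, hβ0, hβ'0, hββ', hsum0, henum⟩ := rank_two_enum U hUr
  have hCc0 : β * β' * (β + β') ≠ 0 := mul_ne_zero (mul_ne_zero hβ0 hβ'0) hsum0
  set Cc : F := β * β' * (β + β') with hCcdef
  set Bc : F := β ^ 2 + β * β' + β' ^ 2 with hBcdef
  set c : F := Cc⁻¹ ^ 2 ^ m with hcdef
  set b : F := (Bc * Cc⁻¹) ^ 2 ^ (m + 1) with hbdef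
  have hc4 : c ^ 4 = Cc⁻¹ := by
    rw [hcdef, ← pow_mul, show 2 ^ m * 4 = 2 ^ (m + 2) by ring, hpc]
  have hb2 : b ^ 2 = Bc * Cc⁻¹ := by
    rw [hbdef, ← pow_mul, show 2 ^ (m + 1) * 2 = 2 ^ (m + 2) by ring, hpc]
  -- the quartic expansion identity
  have expand : ∀ z a a' : F,
      z * (z + a) * (z + a') * (z + a + a')
        = z ^ 4 + (a ^ 2 + a * a' + a' ^ 2) * z ^ 2 + (a * a' * (a + a')) * z := by
    intro z a a'
    linear_combination (z ^ 2 * a * a' + z ^ 3 * a' + z ^ 3 * a) * h2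
  -- the linear map T
  obtain ⟨Tf, hTf_apply⟩ :
      ∃ Tf : F →ₗ[ZMod 2] F, ∀ x : F, Tf x = x ^ 4 + b * x ^ 2 + c * x := by
    have hzmod : ∀ r : ZMod 2, r = 0 ∨ r = 1 := by decide
    refine ⟨{ toFun := fun x => x ^ 4 + b * x ^ 2 + c * x
              map_add' := ?_
              map_smul' := ?_ }, fun x => rfl⟩
    · intro x y
      have e4 : (x + y) ^ 4 = x ^ 4 + y ^ 4 := by
        calc (x + y) ^ 4 = ((x + y) ^ 2) ^ 2 := by ring
          _ = (x ^ 2 + y ^ 2) ^ 2 := by rw [hsq]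
          _ = (x ^ 2) ^ 2 + (y ^ 2) ^ 2 := by rw [hsq]
          _ = x ^ 4 + y ^ 4 := by ring
      linear_combination e4 + b * hsq x y
    · intro r x
      rcases hzmod r with h | h <;> subst h <;> simp
  -- the adjoint identity
  have hadj : ∀ x y : F,
      tr (y * Tf x) = tr ((c * y + (b * y) ^ 2 ^ (m + 1) + y ^ 2 ^ m) * x) := by
    intro x y
    rw [hTf_apply]
    have t1 : tr (y * x ^ 4) = tr (y ^ 2 ^ m * x) := by
      have e : (y ^ 2 ^ m * x) ^ 2 ^ 2 = y * x ^ 4 := by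
        rw [mul_pow, ← pow_mul, show 2 ^ m * 2 ^ 2 = 2 ^ (m + 2) by ring, hpc]
        norm_num
      rw [← e, htrp 2]
    have t2 : tr (b * (y * x ^ 2)) = tr ((b * y) ^ 2 ^ (m + 1) * x) := by
      have e : ((b * y) ^ 2 ^ (m + 1) * x) ^ 2 ^ 1 = b * (y * x ^ 2) := by
        rw [mul_pow, ← pow_mul, show 2 ^ (m + 1) * 2 ^ 1 = 2 ^ (m + 2) by ring, hpc]
        ring
      rw [← e, htrp 1]
    calc tr (y * (x ^ 4 + b * x ^ 2 + c * x))
        = tr (y * x ^ 4) + tr (b * (y * x ^ 2)) + tr (c * (y * x)) := by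
          rw [show y * (x ^ 4 + b * x ^ 2 + c * x)
              = y * x ^ 4 + (b * (y * x ^ 2) + c * (y * x)) by ring, map_add, map_add]
          ring
      _ = tr (y ^ 2 ^ m * x) + tr ((b * y) ^ 2 ^ (m + 1) * x) + tr (c * (y * x)) := by
          rw [t1, t2]
      _ = tr ((c * y + (b * y) ^ 2 ^ (m + 1) + y ^ 2 ^ m) * x) := by
          rw [show (c * y + (b * y) ^ 2 ^ (m + 1) + y ^ 2 ^ m) * x
              = y ^ 2 ^ m * x + ((b * y) ^ 2 ^ (m + 1) * x + c * (y * x)) by ring,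
            map_add, map_add]
          ring
  -- the adjoint vanishes on U
  have hkey : ∀ y : F, y * (y + β) * (y + β') * (y + β + β') = 0 →
      c * y + (b * y) ^ 2 ^ (m + 1) + y ^ 2 ^ m = 0 := by
    intro y hzero
    have h4 : (c * y + (b * y) ^ 2 ^ (m + 1) + y ^ 2 ^ m) ^ 4
        = Cc⁻¹ * (y * (y + β) * (y + β') * (y + β + β')) := by
      have e1 : (c * y + (b * y) ^ 2 ^ (m + 1) + y ^ 2 ^ m) ^ 4
          = ((c * y) ^ 2) ^ 2 + (((b * y) ^ 2 ^ (m + 1)) ^ 2) ^ 2 + ((y ^ 2 ^ m) ^ 2) ^ 2 := by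
        calc (c * y + (b * y) ^ 2 ^ (m + 1) + y ^ 2 ^ m) ^ 4
            = ((c * y + (b * y) ^ 2 ^ (m + 1) + y ^ 2 ^ m) ^ 2) ^ 2 := by ring
          _ = ((c * y) ^ 2 + ((b * y) ^ 2 ^ (m + 1)) ^ 2 + (y ^ 2 ^ m) ^ 2) ^ 2 := by
              rw [hsq3]
          _ = _ := by rw [hsq3]
      have f1 : ((c * y) ^ 2) ^ 2 = Cc⁻¹ * y ^ 4 := by
        rw [show ((c * y) ^ 2) ^ 2 = c ^ 4 * y ^ 4 by ring, hc4]
      have f2 : (((b * y) ^ 2 ^ (m + 1)) ^ 2) ^ 2 = Bc * Cc⁻¹ * y ^ 2 := by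
        rw [show (((b * y) ^ 2 ^ (m + 1)) ^ 2) ^ 2 = ((b * y) ^ 2 ^ (m + 1)) ^ 4 by ring,
          ← pow_mul, show 2 ^ (m + 1) * 4 = 2 ^ (m + 2) * 2 by ring, pow_mul, hpc,
          mul_pow, hb2]
      have f3 : ((y ^ 2 ^ m) ^ 2) ^ 2 = y := by
        rw [show ((y ^ 2 ^ m) ^ 2) ^ 2 = (y ^ 2 ^ m) ^ 4 by ring,
          ← pow_mul, show 2 ^ m * 4 = 2 ^ (m + 2) by ring, hpc]
      rw [e1, f1, f2, f3, expand y β β', ← hBcdef, ← hCcdef]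
      have hCi : Cc⁻¹ * Cc = 1 := inv_mul_cancel₀ hCc0
      linear_combination (-y) * hCi
    rw [hzero, mul_zero] at h4
    exact (pow_eq_zero_iff (n := 4) (by norm_num)).mp h4
  have hTstar : ∀ y : F, y ∈ U → c * y + (b * y) ^ 2 ^ (m + 1) + y ^ 2 ^ m = 0 := by
    intro y hy
    rcases henum y hy with h | h | h | h <;> apply hkey y <;> rw [h]
    · ring
    · linear_combination (β ^ 2 * (β + β') * (β + β + β')) * h2
    · linear_combination (β' ^ 2 * (β' + β) * (β' + β + β')) * h2
    · linear_combination ((β + β') ^ 2 * (β + β' + β) * (β + β' + β')) * h2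
  -- range of T is contained in V
  have hrange_le : LinearMap.range Tf ≤ V := by
    rw [hVU]
    rintro _ ⟨x, rfl⟩
    rw [LinearMap.BilinForm.mem_orthogonal_iff]
    intro y hy
    show B y (Tf x) = 0
    have hth := hadj x y
    rw [hTstar y hy, zero_mul] at hth
    rw [hBdef, Algebra.traceForm_apply, ← htr, hth, map_zero]
  -- kernel of T has dimension at most 2
  have hker_le : finrank (ZMod 2) (LinearMap.ker Tf) ≤ 2 := by
    by_contra hlt
    push_neg at hlt
    haveI := Fintype.ofFinite (LinearMap.ker Tf)
    have hcard : Fintype.card (LinearMap.ker Tf)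
        = 2 ^ finrank (ZMod 2) (LinearMap.ker Tf) := by
      have hc := card_eq_pow_finrank (K := ZMod 2) (V := LinearMap.ker Tf)
      rwa [ZMod.card] at hc
    have hinj : Fintype.card (LinearMap.ker Tf)
        ≤ (Finset.univ.filter (fun x : F => x ^ 4 + b * x ^ 2 + c * x = 0)).card := by
      rw [← Fintype.card_coe]
      refine Fintype.card_le_of_injective (fun x => ⟨x.1, ?_⟩)
        (fun u v huv => Subtype.ext (by simpa using huv))
      rw [Finset.mem_filter]
      exact ⟨Finset.mem_univ _, by rw [← hTf_apply]; exact LinearMap.mem_ker.mp x.2⟩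
    have hle4 := quartic_roots_card b c
    have h8 : 2 ^ 3 ≤ 2 ^ finrank (ZMod 2) (LinearMap.ker Tf) :=
      Nat.pow_le_pow_right (by norm_num) (by omega)
    omega
  -- range of T equals V
  have hrn := LinearMap.finrank_range_add_finrank_ker Tf
  rw [hfr] at hrn
  have hVm : finrank (ZMod 2) V = m := by omega
  have hrange_eq : LinearMap.range Tf = V := by
    apply Submodule.eq_of_le_of_finrank_le hrange_le
    rw [hVm]; omega
  have hker2 : finrank (ZMod 2) (LinearMap.ker Tf) = 2 := by
    rw [hrange_eq, hVm] at hrn; omega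
  -- extract a basis of the kernel
  obtain ⟨α, α', hαk, hα'k, hα0, hα'0, hαα', hs0, -⟩ :=
    rank_two_enum (LinearMap.ker Tf) hker2
  have hEα : α ^ 4 + b * α ^ 2 + c * α = 0 := by
    rw [← hTf_apply]; exact LinearMap.mem_ker.mp hαk
  have hEα' : α' ^ 4 + b * α' ^ 2 + c * α' = 0 := by
    rw [← hTf_apply]; exact LinearMap.mem_ker.mp hα'k
  have r1 : (b - (α ^ 2 + α * α' + α' ^ 2)) * α ^ 2 + (c - α * α' * (α + α')) * α = 0 := by
    linear_combination hEα - (α ^ 4 + α ^ 3 * α' + α ^ 2 * α' ^ 2) * h2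
  have r2 : (b - (α ^ 2 + α * α' + α' ^ 2)) * α' ^ 2 + (c - α * α' * (α + α')) * α' = 0 := by
    linear_combination hEα' - (α' ^ 4 + α * α' ^ 3 + α ^ 2 * α' ^ 2) * h2
  have r1' : (b - (α ^ 2 + α * α' + α' ^ 2)) * α + (c - α * α' * (α + α')) = 0 := by
    have hm : α * ((b - (α ^ 2 + α * α' + α' ^ 2)) * α + (c - α * α' * (α + α'))) = 0 := by
      linear_combination r1
    rcases mul_eq_zero.mp hm with h | h
    · exact absurd h hα0
    · exact h
  have r2' : (b - (α ^ 2 + α * α' + α' ^ 2)) * α' + (c - α * α' * (α + α')) = 0 := by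
    have hm : α' * ((b - (α ^ 2 + α * α' + α' ^ 2)) * α' + (c - α * α' * (α + α'))) = 0 := by
      linear_combination r2
    rcases mul_eq_zero.mp hm with h | h
    · exact absurd h hα'0
    · exact h
  have hbB : b - (α ^ 2 + α * α' + α' ^ 2) = 0 := by
    have hm : (b - (α ^ 2 + α * α' + α' ^ 2)) * (α - α') = 0 := by
      linear_combination r1' - r2'
    rcases mul_eq_zero.mp hm with h | h
    · exact h
    · exact absurd (sub_eq_zero.mp h) hαα'
  have hcC : c - α * α' * (α + α') = 0 := by linear_combination r1' - α * hbB
  refine ⟨α, α', hα0, hα'0, hαα', ?_⟩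
  have hfun : (fun x : F => x * (x + α) * (x + α') * (x + α + α')) = fun x : F => Tf x := by
    funext x
    rw [hTf_apply, expand x α α', sub_eq_zero.mp hbB, sub_eq_zero.mp hcC]
  rw [hfun, ← hrange_eq]
  exact (LinearMap.coe_range Tf).symm
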